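/- Uniqueness of the immediate double-vertex dominator: For any vertex u in a finite directed acyclic graph, if the set D_u of double-vertex dominators of u is non-empty, then there exists a unique double-vertex dominator D ∈ D_u such that D is dominated by every element of D_u; equivalently, u has a unique immediate double-vertex dominator. -/

import Mathlib

/-- A nonempty directed path `p` from `a` to `b` in the graph with edge relation `E`. -/
def IsPath {V : Type*} (E : V → V → Prop) (p : List V) (a b : V) : Prop :=
  p ≠ [] ∧ p.head? = some a ∧ p.getLast? = some b ∧ p.Chain' E

/-- `A` dominates `B` with respect to `root`: every path from a vertex of `B` to `root`
contains a vertex of `A`. -/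
def Dominates {V : Type*} (E : V → V → Prop) (root : V) (A B : Set V) : Prop :=
  ∀ b ∈ B, ∀ p : List V, IsPath E p b root → ∃ a ∈ A, a ∈ p

/-- `A` is a dominator of `B`: it dominates `B` and no proper subset `A \ {v}` does. -/
def IsDominator {V : Type*} (E : V → V → Prop) (root : V) (A B : Set V) : Prop :=
  Dominates E root A B ∧ ∀ v ∈ A, ¬ Dominates E root (A \ {v}) B

/-- `{v, w}` is a double-vertex dominator of `u`. -/
def DoubleDom {V : Type*} (E : V → V → Prop) (root : V) (u v w : V) : Prop :=
  v ≠ w ∧ Dominates E root {v, w} {u} ∧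
    ¬ Dominates E root {v} {u} ∧ ¬ Dominates E root {w} {u}

/-- The edge relation `E` is acyclic. -/
def Acyclic {V : Type*} (E : V → V → Prop) : Prop :=
  ∀ a b, E a b → ¬ Relation.ReflTransGen E b a

section Proofs

variable {V : Type*}

/-- Reachability avoiding `A` (except possibly at the start). -/
def Reach (E : V → V → Prop) (A : Set V) (a b : V) : Prop :=
  Relation.ReflTransGen (fun x y => E x y ∧ y ∉ A) a b

variable {E : V → V → Prop} {root : V}

lemma Reach.mono {A B : Set V} (h : A ⊆ B) {a b : V} (hr : Reach E B a b) :
    Reach E A a b :=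
  Relation.ReflTransGen.mono (r := fun x y => E x y ∧ y ∉ B) (p := fun x y => E x y ∧ y ∉ A)
    (fun x y hxy => ⟨hxy.1, fun hy => hxy.2 (h hy)⟩) a b hr

lemma Reach.toRTG {A : Set V} {a b : V} (hr : Reach E A a b) :
    Relation.ReflTransGen E a b :=
  Relation.ReflTransGen.mono (r := fun x y => E x y ∧ y ∉ A) (p := E) (fun _ _ hxy => hxy.1) a b hr

lemma Reach.trans {A : Set V} {a b c : V} (h1 : Reach E A a b) (h2 : Reach E A b c) :
    Reach E A a c :=
  Relation.ReflTransGen.trans h1 h2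

lemma reach_of_path {A : Set V} :
    ∀ (p : List V) (a b : V), IsPath E p a b → (∀ x ∈ p, x ∉ A) → Reach E A a b
  | [], _, _, hp, _ => absurd rfl hp.1
  | [x], a, b, hp, _ => by
      obtain ⟨-, h1, h2, -⟩ := hp
      simp only [List.head?_cons, Option.some_inj] at h1
      simp only [List.getLast?_singleton, Option.some_inj] at h2
      subst h1; subst h2
      exact Relation.ReflTransGen.refl
  | x :: y :: t, a, b, hp, hA => by
      obtain ⟨-, h1, h2, h3⟩ := hp
      simp only [List.head?_cons, Option.some_inj] at h1
      subst h1
      unfold List.Chain' at h3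
      rw [List.isChain_cons_cons] at h3
      have hyb : Reach E A y b := by
        refine reach_of_path (y :: t) y b ⟨by simp, by simp, ?_, h3.2⟩ ?_
        · simpa using h2
        · intro z hz; exact hA z (List.mem_cons_of_mem _ hz)
      exact Relation.ReflTransGen.head ⟨h3.1, hA y (by simp)⟩ hyb

lemma path_of_reach {A : Set V} {a b : V} (h : Reach E A a b) (ha : a ∉ A) :
    ∃ p, IsPath E p a b ∧ ∀ x ∈ p, x ∉ A := by
  induction h with
  | refl => exact ⟨[a], ⟨by simp, by simp, by simp, List.isChain_singleton _⟩, by simpa using ha⟩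
  | @tail c d _ hcd ih =>
    obtain ⟨p, ⟨hne, hh, hl, hc⟩, hA⟩ := ih
    refine ⟨p ++ [d], ⟨by simp, ?_, ?_, ?_⟩, ?_⟩
    · rwa [List.head?_append_of_ne_nil _ hne]
    · simp [List.getLast?_concat]
    · unfold List.Chain'
      rw [List.isChain_append]
      refine ⟨hc, by simp, ?_⟩
      intro x hx y hy
      simp only [List.head?_cons, Option.mem_def, Option.some_inj] at hy
      rw [hl] at hx
      simp only [Option.mem_def, Option.some_inj] at hx
      subst hx; subst hy; exact hcd.1
    · intro x hx
      rcases List.mem_append.1 hx with h | h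
      · exact hA x h
      · simp only [List.mem_singleton] at h; subst h; exact hcd.2

lemma dominates_iff {A B : Set V} :
    Dominates E root A B ↔ ∀ b ∈ B, b ∉ A → ¬ Reach E A b root := by
  constructor
  · intro h b hb hbA hr
    obtain ⟨p, hp, hpA⟩ := path_of_reach hr hbA
    obtain ⟨x, hxA, hxp⟩ := h b hb p hp
    exact hpA x hxp hxA
  · intro h b hb p hp
    by_contra hc
    push_neg at hc
    have hbp : b ∈ p := List.mem_of_mem_head? (by rw [hp.2.1]; simp)
    exact h b hb (fun hbA => hc b hbA hbp)
      (reach_of_path p b root hp (fun x hx hxA => hc x hxA hx))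

/-- Split / first-hit lemma. -/
lemma reach_splitS {A S : Set V} {a b : V} (h : Reach E A a b) :
    Reach E (A ∪ S) a b ∨
      ∃ d ∈ S, d ∉ A ∧ Reach E ((A ∪ S) \ {d}) a d ∧ Reach E A d b := by
  induction h with
  | refl => exact Or.inl Relation.ReflTransGen.refl
  | @tail c d _ hcd ih =>
    obtain ⟨hE, hdA⟩ := hcd
    rcases ih with h | ⟨e, heS, heA, h1, h2⟩
    · by_cases hdS : d ∈ S
      · refine Or.inr ⟨d, hdS, hdA, ?_, Relation.ReflTransGen.refl⟩
        exact (h.mono (Set.diff_subset)).tail ⟨hE, by simp⟩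
      · exact Or.inl (h.tail ⟨hE, by simp [hdA, hdS]⟩)
    · exact Or.inr ⟨e, heS, heA, h1, h2.tail ⟨hE, hdA⟩⟩

lemma reach_insert_self (hacyc : Acyclic E) {A : Set V} {a b : V} (h : Reach E A a b) :
    Reach E (insert a A) a b := by
  induction h with
  | refl => exact Relation.ReflTransGen.refl
  | @tail c d hac hcd ih =>
    obtain ⟨hE, hdA⟩ := hcd
    by_cases hda : d = a
    · subst hda; exact absurd (Reach.toRTG hac) (hacyc c d hE)
    · exact ih.tail ⟨hE, by simp [hda, hdA]⟩

lemma rtg_antisymm (hacyc : Acyclic E) {a b : V}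
    (h1 : Relation.ReflTransGen E a b) (h2 : Relation.ReflTransGen E b a) : a = b := by
  rcases h1.cases_head with rfl | ⟨c, hac, hcb⟩
  · rfl
  · exact absurd (hcb.trans h2) (hacyc a c hac)


variable {u v w p q x y s t : V}

lemma dd_unfold (h : DoubleDom E root u v w) :
    v ≠ w ∧ u ∉ ({v, w} : Set V) ∧ ¬ Reach E {v, w} u root ∧
      Reach E {v} u root ∧ Reach E {w} u root := by
  obtain ⟨hvw, hdom, hv, hw⟩ := h
  rw [dominates_iff] at hdom hv hw
  push_neg at hv hw
  obtain ⟨b, hb, hbv, hrv⟩ := hv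
  obtain ⟨c, hc, hcw, hrw⟩ := hw
  rw [Set.mem_singleton_iff] at hb hc
  rw [hb] at hbv hrv; rw [hc] at hcw hrw
  have huvw : u ∉ ({v, w} : Set V) := by
    simp only [Set.mem_insert_iff, Set.mem_singleton_iff]
    push_neg
    exact ⟨by simpa using hbv, by simpa using hcw⟩
  exact ⟨hvw, huvw, hdom u rfl huvw, hrv, hrw⟩

lemma dd_symm (h : DoubleDom E root u v w) : DoubleDom E root u w v :=
  ⟨h.1.symm, by rw [Set.pair_comm]; exact h.2.1, h.2.2.2, h.2.2.1⟩

lemma pair_eq_pair {p q x y : V} (hpq : p ≠ q) (h : ({p, q} : Set V) = {x, y}) :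
    (p = x ∧ q = y) ∨ (p = y ∧ q = x) := by
  have hp : p ∈ ({x, y} : Set V) := h ▸ (by simp : p ∈ ({p, q} : Set V))
  have hq : q ∈ ({x, y} : Set V) := h ▸ (by simp : q ∈ ({p, q} : Set V))
  have hx : x ∈ ({p, q} : Set V) := h.symm ▸ (by simp : x ∈ ({x, y} : Set V))
  have hy : y ∈ ({p, q} : Set V) := h.symm ▸ (by simp : y ∈ ({x, y} : Set V))
  simp only [Set.mem_insert_iff, Set.mem_singleton_iff] at hp hq hx hy
  tauto

lemma dd_congr (h : DoubleDom E root u p q) (heq : ({p, q} : Set V) = {x, y}) :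
    DoubleDom E root u x y := by
  rcases pair_eq_pair h.1 heq with ⟨rfl, rfl⟩ | ⟨rfl, rfl⟩
  · exact h
  · exact dd_symm h

lemma pair_eq_of_mem {p q x y : V} (hx : x ∈ ({p, q} : Set V)) (hy : y ∈ ({p, q} : Set V))
    (hxy : x ≠ y) : ({p, q} : Set V) = {x, y} := by
  simp only [Set.mem_insert_iff, Set.mem_singleton_iff] at hx hy
  rcases hx with rfl | rfl <;> rcases hy with rfl | rfl
  · exact absurd rfl hxy
  · rfl
  · exact Set.pair_comm _ _
  · exact absurd rfl hxy

/-- Key acyclicity lemma: configuration forcing `{t}` to dominate `u`, a contradiction. -/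
lemma lemC (hacyc : Acyclic E) (hP : DoubleDom E root u p q) (hQ : DoubleDom E root u s t)
    (hsP : s ∉ ({p, q} : Set V)) (hreach : Reach E {p, q} u s)
    (hp : p ∉ ({s, t} : Set V) → ¬ Reach E {s, t} p root)
    (hq : q ∉ ({s, t} : Set V) → ¬ Reach E {s, t} q root) : False := by
  obtain ⟨hst, hust, hdomst, hsu, htu⟩ := dd_unfold hQ
  obtain ⟨hpq, hupq, hdompq, -, -⟩ := dd_unfold hP
  -- htu : Reach E {t} u root ; must pass through s
  have hts : Reach E {t} s root := by
    rcases reach_splitS (S := {s}) htu with h | ⟨d, hd, -, -, h2⟩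
    · exact absurd (h.mono (by intro x hx; simp at hx ⊢; tauto)) hdomst
    · rw [Set.mem_singleton_iff] at hd; subst hd; exact h2
  -- chain from s to root avoiding t must hit {p,q}
  have hnspq : ¬ Reach E {p, q} s root := fun h => hdompq (hreach.trans h)
  rcases reach_splitS (S := {p, q}) hts with h | ⟨e, heS, heA, h3, h4⟩
  · exact hnspq (h.mono (by intro x hx; simp at hx ⊢; tauto))
  · -- e ∈ {p,q}, e ∉ {t}, chain s→e and chain e→root avoiding t
    have hes : e ≠ s := fun h => hsP (h ▸ heS)
    have het : e ∉ ({s, t} : Set V) := by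
      simp only [Set.mem_insert_iff, Set.mem_singleton_iff]
      push_neg
      exact ⟨hes, by simpa using heA⟩
    have hne : ¬ Reach E {s, t} e root := by
      simp only [Set.mem_insert_iff, Set.mem_singleton_iff] at heS
      rcases heS with rfl | rfl
      · exact hp het
      · exact hq het
    -- chain e → root avoiding t must hit s
    rcases reach_splitS (S := {s}) h4 with h | ⟨d, hd, -, h5, -⟩
    · exact hne (h.mono (by intro x hx; simp at hx ⊢; tauto))
    · rw [Set.mem_singleton_iff] at hd; subst hd
      exact hes (rtg_antisymm hacyc (Reach.toRTG h5) (Reach.toRTG h3))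


lemma meet (hacyc : Acyclic E) {v1 w1 v2 w2 : V}
    (h1 : DoubleDom E root u v1 w1) (h2 : DoubleDom E root u v2 w2) :
    ∃ a b, DoubleDom E root u a b ∧ Dominates E root {v1, w1} {a, b} ∧
      Dominates E root {v2, w2} {a, b} := by
  classical
  obtain ⟨hvw1, hu1, hnd1, hrv1, hrw1⟩ := dd_unfold h1
  obtain ⟨hvw2, hu2, hnd2, hrv2, hrw2⟩ := dd_unfold h2
  set W : Set V := {v1, w1} ∪ {v2, w2} with hWdef
  set F : Set V := {d | d ∈ W ∧ Reach E (W \ {d}) u d} with hFdef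
  have hFW : F ⊆ W := fun d hd => hd.1
  have h1W : ({v1, w1} : Set V) ⊆ W := Set.subset_union_left
  have h2W : ({v2, w2} : Set V) ⊆ W := Set.subset_union_right
  have huW : u ∉ W := by
    intro h
    rcases h with h | h
    · exact hu1 h
    · exact hu2 h
  have hWd : ∀ d ∈ W, u ≠ d ∧ Reach E {d} u root := by
    intro d hd
    rcases hd with hd | hd <;>
      simp only [Set.mem_insert_iff, Set.mem_singleton_iff] at hd <;> rcases hd with rfl | rfl
    · exact ⟨fun h => hu1 (by simp [h]), hrv1⟩
    · exact ⟨fun h => hu1 (by simp [h]), hrw1⟩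
    · exact ⟨fun h => hu2 (by simp [h]), hrv2⟩
    · exact ⟨fun h => hu2 (by simp [h]), hrw2⟩
  have hWu : ¬ Reach E W u root := fun h => hnd1 (h.mono h1W)
  have hFu : ¬ Reach E F u root := by
    intro h
    rcases reach_splitS (S := W) h with h' | ⟨d, hdW, hdF, hre, -⟩
    · exact hWu (h'.mono Set.subset_union_right)
    · refine hdF ⟨hdW, hre.mono ?_⟩
      intro y hy
      exact ⟨Set.mem_union_right _ hy.1, hy.2⟩
  have lemA : ∀ x ∈ F, ∀ A : Set V, A ⊆ W → x ∉ A → ¬ Reach E A u root →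
      ¬ Reach E A x root := by
    intro x hx A hAW hxA hAu hr
    refine hAu ((Reach.mono ?_ hx.2).trans hr)
    intro y hy
    exact ⟨hAW hy, fun h => hxA ((Set.mem_singleton_iff.1 h) ▸ hy)⟩
  have hFex : ∃ a ∈ F, ∃ b ∈ F, a ≠ b := by
    by_contra hcon
    push_neg at hcon
    by_cases hex : ∃ d, d ∈ F
    · obtain ⟨d, hd⟩ := hex
      exact hFu (Reach.mono (fun x hx => Set.mem_singleton_iff.2 (hcon x hx d hd))
        (hWd d (hFW hd)).2)
    · push_neg at hex
      exact hFu (Reach.mono (fun x hx => absurd hx (hex x)) hrv1)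
  have core : ∀ p' q' z z' : V, DoubleDom E root u p' q' → DoubleDom E root u z z' →
      ({p', q'} : Set V) ⊆ W → ({z, z'} : Set V) ⊆ W →
      p' ∈ F → q' ∈ F → z ∈ F → z ∉ ({p', q'} : Set V) → False := by
    intro p' q' z z' hP hQ hPW hQW hpF hqF hzF hzP
    have hndP : ¬ Reach E {p', q'} u root := (dd_unfold hP).2.2.1
    have hndQ : ¬ Reach E {z, z'} u root := (dd_unfold hQ).2.2.1
    refine lemC hacyc hP hQ hzP ?_ ?_ ?_
    · refine Reach.mono ?_ hzF.2
      intro y hy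
      exact ⟨hPW hy, fun h => hzP ((Set.mem_singleton_iff.1 h) ▸ hy)⟩
    · intro hps; exact lemA p' hpF {z, z'} hQW hps hndQ
    · intro hqs; exact lemA q' hqF {z, z'} hQW hqs hndQ
  have step : ∀ x ∈ F, ∀ y ∈ F, ∀ z ∈ F, x ≠ y → z ≠ x → z ≠ y →
      ∀ p' q' : V, DoubleDom E root u p' q' → ({p', q'} : Set V) ⊆ W →
      x ∈ ({p', q'} : Set V) → y ∈ ({p', q'} : Set V) → False := by
    intro x hx y hy z hz hxy hzx hzy p' q' hP hPW hxP hyP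
    have heq : ({p', q'} : Set V) = {x, y} := pair_eq_of_mem hxP hyP hxy
    have hzP : z ∉ ({x, y} : Set V) := by
      simp only [Set.mem_insert_iff, Set.mem_singleton_iff]
      push_neg
      exact ⟨hzx, hzy⟩
    have hxyW : ({x, y} : Set V) ⊆ W := heq ▸ hPW
    have hDxy : DoubleDom E root u x y := dd_congr hP heq
    have hzW : z ∈ ({v1, w1} : Set V) ∨ z ∈ ({v2, w2} : Set V) := hFW hz
    rcases hzW with h | h <;>
      simp only [Set.mem_insert_iff, Set.mem_singleton_iff] at h
    · rcases h with rfl | rfl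
      · exact core x y z w1 hDxy h1 hxyW h1W hx hy hz hzP
      · exact core x y z v1 hDxy (dd_symm h1) hxyW (by rw [Set.pair_comm]; exact h1W) hx hy hz hzP
    · rcases h with rfl | rfl
      · exact core x y z w2 hDxy h2 hxyW h2W hx hy hz hzP
      · exact core x y z v2 hDxy (dd_symm h2) hxyW (by rw [Set.pair_comm]; exact h2W) hx hy hz hzP
  have hle2 : ∀ a ∈ F, ∀ b ∈ F, ∀ c ∈ F, a ≠ b → c ≠ a → c ≠ b → False := by
    intro a ha b hb c hc hab hca hcb
    have hmem : ∀ x, x ∈ F → x ∉ ({v1, w1} : Set V) → x ∈ ({v2, w2} : Set V) := by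
      intro x hx hx1
      exact (hFW hx).resolve_left hx1
    by_cases ha1 : a ∈ ({v1, w1} : Set V)
    · by_cases hb1 : b ∈ ({v1, w1} : Set V)
      · exact step a ha b hb c hc hab hca hcb v1 w1 h1 h1W ha1 hb1
      · by_cases hc1 : c ∈ ({v1, w1} : Set V)
        · exact step a ha c hc b hb hca.symm hab.symm hcb.symm v1 w1 h1 h1W ha1 hc1
        · exact step b hb c hc a ha (Ne.symm hcb) hab hca.symm v2 w2 h2 h2W
            (hmem b hb hb1) (hmem c hc hc1)
    · by_cases hb1 : b ∈ ({v1, w1} : Set V)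
      · by_cases hc1 : c ∈ ({v1, w1} : Set V)
        · exact step b hb c hc a ha (Ne.symm hcb) hab hca.symm v1 w1 h1 h1W hb1 hc1
        · exact step a ha c hc b hb hca.symm hab.symm hcb.symm v2 w2 h2 h2W
            (hmem a ha ha1) (hmem c hc hc1)
      · exact step a ha b hb c hc hab hca hcb v2 w2 h2 h2W (hmem a ha ha1) (hmem b hb hb1)
  obtain ⟨a, ha, b, hb, hab⟩ := hFex
  have hFab : F = {a, b} := by
    apply Set.eq_of_subset_of_subset
    · intro c hc
      by_cases h : c = a
      · exact Or.inl h
      · by_cases h' : c = b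
        · exact Or.inr h'
        · exact absurd (hle2 a ha b hb c hc hab h h') not_false
    · intro c hc
      rcases hc with rfl | hc
      · exact ha
      · rw [Set.mem_singleton_iff] at hc; exact hc ▸ hb
  have hDab : DoubleDom E root u a b := by
    refine ⟨hab, ?_, ?_, ?_⟩
    · rw [dominates_iff]
      intro x hx hxab hr
      rw [Set.mem_singleton_iff] at hx
      rw [hx] at hr
      exact hFu (Reach.mono (le_of_eq hFab) hr)
    · rw [dominates_iff]
      push_neg
      exact ⟨u, rfl, by simpa using (hWd a (hFW ha)).1, by
        simpa using (hWd a (hFW ha)).2⟩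
    · rw [dominates_iff]
      push_neg
      exact ⟨u, rfl, by simpa using (hWd b (hFW hb)).1, by
        simpa using (hWd b (hFW hb)).2⟩
  refine ⟨a, b, hDab, ?_, ?_⟩
  · rw [dominates_iff]
    intro d hd hdP hr
    have hdF : d ∈ F := hFab ▸ hd
    exact lemA d hdF {v1, w1} h1W hdP hnd1 hr
  · rw [dominates_iff]
    intro d hd hdP hr
    have hdF : d ∈ F := hFab ▸ hd
    exact lemA d hdF {v2, w2} h2W hdP hnd2 hr


lemma dominates_trans {A B C : Set V} (hAB : Dominates E root A B)
    (hBC : Dominates E root B C) : Dominates E root A C := by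
  rw [dominates_iff] at *
  intro c hc hcA hr
  by_cases hcB : c ∈ B
  · exact hAB c hcB hcA hr
  · rcases reach_splitS (S := B) hr with h | ⟨e, heB, heA, -, h4⟩
    · exact hBC c hc hcB (h.mono Set.subset_union_right)
    · exact hAB e heB heA h4

lemma mem_of_mutual (hacyc : Acyclic E) {v w v' w' : V} (hD' : DoubleDom E root u v' w')
    (h1 : Dominates E root {v, w} {v', w'}) (h2 : Dominates E root {v', w'} {v, w}) :
    v' ∈ ({v, w} : Set V) := by
  obtain ⟨hvw', hu', hnd', hrv', hrw'⟩ := dd_unfold hD'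
  by_contra hmem
  rcases reach_splitS (S := {v'}) hrw' with h | ⟨d, hd, -, -, h4⟩
  · exact hnd' (h.mono (by intro x hx; simp at hx ⊢; tauto))
  · rw [Set.mem_singleton_iff] at hd
    rw [hd] at h4
    have h5 : Reach E {v', w'} v' root := reach_insert_self hacyc h4
    rw [dominates_iff] at h1 h2
    rcases reach_splitS (S := {v, w}) h5 with h | ⟨e, heD, heA, -, h6⟩
    · exact h1 v' (by simp) hmem (h.mono (by intro x hx; simp at hx ⊢; tauto))
    · exact h2 e heD heA h6

lemma mutual_pair_eq (hacyc : Acyclic E) {v w v' w' : V}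
    (hD : DoubleDom E root u v w) (hD' : DoubleDom E root u v' w')
    (h1 : Dominates E root {v, w} {v', w'}) (h2 : Dominates E root {v', w'} {v, w}) :
    ({v, w} : Set V) = {v', w'} := by
  have hv' := mem_of_mutual hacyc hD' h1 h2
  have hw' : w' ∈ ({v, w} : Set V) := by
    have h1' : Dominates E root {v, w} {w', v'} := by rw [Set.pair_comm w' v']; exact h1
    have h2' : Dominates E root ({w', v'} : Set V) {v, w} := by
      rw [Set.pair_comm w' v']; exact h2
    exact mem_of_mutual hacyc (dd_symm hD') h1' h2'
  exact pair_eq_of_mem hv' hw' hD'.1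

lemma fold_min (hacyc : Acyclic E) (hne : ∃ v w, DoubleDom E root u v w)
    (L : List (V × V)) : ∃ a b, DoubleDom E root u a b ∧
      ∀ p ∈ L, DoubleDom E root u p.1 p.2 → Dominates E root {p.1, p.2} {a, b} := by
  induction L with
  | nil =>
    obtain ⟨v, w, h⟩ := hne
    exact ⟨v, w, h, by simp⟩
  | cons q L ih =>
    obtain ⟨a, b, hab, hL⟩ := ih
    by_cases hq : DoubleDom E root u q.1 q.2
    · obtain ⟨a', b', hab', hd1, hd2⟩ := meet hacyc hab hq
      refine ⟨a', b', hab', ?_⟩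
      intro p hp hpd
      rcases List.mem_cons.1 hp with rfl | hp'
      · exact hd2
      · exact dominates_trans (hL p hp' hpd) hd1
    · refine ⟨a, b, hab, ?_⟩
      intro p hp hpd
      rcases List.mem_cons.1 hp with rfl | hp'
      · exact absurd hpd hq
      · exact hL p hp' hpd

end Proofs


theorem immediate_doubleDom_unique {V : Type*} [Fintype V] (E : V → V → Prop) (root : V)
    (hacyc : Acyclic E) (u : V) (hne : ∃ v w, DoubleDom E root u v w) :
    ∃! D : Set V, (∃ v w, D = {v, w} ∧ DoubleDom E root u v w) ∧
      ∀ v' w', DoubleDom E root u v' w' → Dominates E root {v', w'} D := by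
  classical
  obtain ⟨a, b, hab, hmin⟩ := fold_min hacyc hne (Finset.univ : Finset (V × V)).toList
  have hminall : ∀ v' w', DoubleDom E root u v' w' → Dominates E root {v', w'} {a, b} := by
    intro v' w' h
    exact hmin (v', w') (by simp [Finset.mem_toList]) h
  refine ⟨{a, b}, ⟨⟨a, b, rfl, hab⟩, hminall⟩, ?_⟩
  rintro D ⟨⟨x, y, rfl, hxy⟩, hdom⟩
  exact mutual_pair_eq hacyc hxy hab (hminall x y hxy) (hdom a b hab)
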